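/- Let S be a hyponormal unilateral weighted shift on H with nonzero weight sequence (α_n)_{n≥1} and M = lim_{n→∞} |α_n|. Then the spectrum of S (and of its adjoint S*) is exactly the closed disk {λ ∈ ℂ : |λ| ≤ M}. -/

import Mathlib

open scoped InnerProductSpace in
private lemma shift_coord' {H : Type*} [NormedAddCommGroup H] [InnerProductSpace ℂ H] [CompleteSpace H]
    (e : HilbertBasis ℕ ℂ H) (α : ℕ → ℂ) (S : H →L[ℂ] H)
    (hS : ∀ n : ℕ, S (e n) = α n • e (n + 1)) (x : H) (m : ℕ) :
    e.repr (S x) m = Nat.rec 0 (fun k _ => α k * e.repr x k) m := by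
  have h2 : HasSum (fun n => e.repr x n • S (e n)) (S x) := by
    have := (e.hasSum_repr x).mapL S
    simpa only [map_smul] using this
  have h3 : HasSum (fun n => ⟪e m, e.repr x n • S (e n)⟫_ℂ) ⟪e m, S x⟫_ℂ :=
    (innerSL ℂ (e m)).hasSum h2
  have hval : ∀ n, ⟪e m, e.repr x n • S (e n)⟫_ℂ
      = if m = n + 1 then α n * e.repr x n else 0 := by
    intro n
    rw [hS n, inner_smul_right, inner_smul_right,
      orthonormal_iff_ite.mp e.orthonormal m (n+1)]
    by_cases h : m = n + 1 <;> simp [h] <;> ring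
  rw [HilbertBasis.repr_apply_apply]
  match m with
  | 0 =>
    refine h3.unique ?_
    convert hasSum_zero with n
    rw [hval n]
    simp
    rfl
  | (k+1) =>
    have h4 : ∀ n, ⟪e (k+1), e.repr x n • S (e n)⟫_ℂ
        = if n = k then α k * e.repr x k else 0 := by
      intro n
      rw [hval n]
      by_cases h : n = k
      · subst h; simp
      · rw [if_neg (fun h' => h (Nat.succ_injective h'.symm)), if_neg h]
    exact h3.unique (by simp only [h4]; exact hasSum_ite_eq k _)

private lemma parseval_aux' {H : Type*} [NormedAddCommGroup H] [InnerProductSpace ℂ H] [CompleteSpace H]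
    (e : HilbertBasis ℕ ℂ H) (y : H) :
    ‖y‖ ^ (2:ℝ) = ∑' m, ‖e.repr y m‖ ^ (2:ℝ) := by
  have h := lp.norm_rpow_eq_tsum (p := 2) (by norm_num) (e.repr y)
  rw [e.repr.norm_map y] at h
  norm_num at h
  convert h using 2 <;> norm_num

private lemma summable_aux' {H : Type*} [NormedAddCommGroup H] [InnerProductSpace ℂ H] [CompleteSpace H]
    (e : HilbertBasis ℕ ℂ H) (y : H) :
    Summable (fun m => ‖e.repr y m‖ ^ (2:ℝ)) := by
  have h := (lp.memℓp (e.repr y)).summable (p := 2) (by norm_num)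
  norm_num at h
  convert h using 2 <;> norm_num

private lemma shift_norm_le' {H : Type*} [NormedAddCommGroup H] [InnerProductSpace ℂ H] [CompleteSpace H]
    (e : HilbertBasis ℕ ℂ H) (α : ℕ → ℂ) (S : H →L[ℂ] H)
    (hS : ∀ n : ℕ, S (e n) = α n • e (n + 1))
    (M : ℝ) (hM0 : 0 ≤ M) (hle : ∀ n, ‖α n‖ ≤ M) : ‖S‖ ≤ M := by
  refine S.opNorm_le_bound hM0 (fun x => ?_)
  have rpow2 : ∀ a : ℝ, a ^ (2:ℝ) = a ^ 2 := fun a => by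
    rw [show (2:ℝ) = ((2:ℕ):ℝ) by norm_num, Real.rpow_natCast]
  have ck : ∀ k, e.repr (S x) (k+1) = α k * e.repr x k :=
    fun k => shift_coord' e α S hS x (k+1)
  have c0 : e.repr (S x) 0 = 0 := shift_coord' e α S hS x 0
  have h1 : ‖S x‖ ^ (2:ℝ) = ∑' k, ‖α k * e.repr x k‖ ^ (2:ℝ) := by
    rw [parseval_aux' e (S x), Summable.tsum_eq_zero_add (summable_aux' e (S x)), c0]
    simp only [ck]
    simp [Real.zero_rpow]
  have h2 : ∑' k, ‖α k * e.repr x k‖ ^ (2:ℝ)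
      ≤ ∑' k, M ^ (2:ℝ) * ‖e.repr x k‖ ^ (2:ℝ) := by
    refine Summable.tsum_le_tsum (fun k => ?_) ?_ ((summable_aux' e x).mul_left _)
    · rw [norm_mul, Real.mul_rpow (norm_nonneg _) (norm_nonneg _)]
      exact mul_le_mul_of_nonneg_right
        (Real.rpow_le_rpow (norm_nonneg _) (hle k) (by norm_num))
        (Real.rpow_nonneg (norm_nonneg _) _)
    · refine ((summable_aux' e (S x)).comp_injective Nat.succ_injective).congr ?_
      intro k
      simp [Function.comp, ck]
  have h3 : ∑' k, M ^ (2:ℝ) * ‖e.repr x k‖ ^ (2:ℝ) = (M * ‖x‖) ^ (2:ℝ) := by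
    rw [tsum_mul_left, ← parseval_aux' e x,
      Real.mul_rpow hM0 (norm_nonneg _)]
  have h4 : ‖S x‖ ^ (2:ℝ) ≤ (M * ‖x‖) ^ (2:ℝ) := by
    rw [h1, ← h3]; exact h2
  have h5 : ‖S x‖ ^ 2 ≤ (M * ‖x‖) ^ 2 := by rw [← rpow2, ← rpow2]; exact h4
  calc ‖S x‖ = Real.sqrt (‖S x‖ ^ 2) := (Real.sqrt_sq (norm_nonneg _)).symm
    _ ≤ Real.sqrt ((M * ‖x‖) ^ 2) := Real.sqrt_le_sqrt h5
    _ = M * ‖x‖ := Real.sqrt_sq (by positivity)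
open scoped InnerProductSpace in
private lemma shift_adjoint_eigen {H : Type*} [NormedAddCommGroup H] [InnerProductSpace ℂ H]
    [CompleteSpace H]
    (e : HilbertBasis ℕ ℂ H) (α : ℕ → ℂ) (S : H →L[ℂ] H)
    (hS : ∀ n : ℕ, S (e n) = α n • e (n + 1)) (hnz : ∀ n : ℕ, α n ≠ 0)
    (M : ℝ) (hM : Filter.Tendsto (fun n : ℕ => ‖α n‖) Filter.atTop (nhds M))
    (lam : ℂ) (hlam : ‖lam‖ < M) :
    lam ∈ spectrum ℂ (ContinuousLinearMap.adjoint S) := by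
  set c : ℕ → ℂ :=
    fun n => Nat.rec (motive := fun _ => ℂ) 1 (fun n cn => lam * cn / star (α n)) n with hcdef
  have hc0 : c 0 = 1 := rfl
  have hcs : ∀ n, c (n+1) = lam * c n / star (α n) := fun n => rfl
  have hrec : ∀ n, star (α n) * c (n+1) = lam * c n := by
    intro n
    rw [hcs n, mul_comm, div_mul_cancel₀ _ (star_ne_zero.mpr (hnz n))]
  have hM0 : 0 < M := lt_of_le_of_lt (norm_nonneg lam) hlam
  set t : ℝ := (‖lam‖ / M + 1) / 2 with ht
  have ht0 : 0 < t := by positivity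
  have ht1 : t < 1 := by
    have : ‖lam‖ / M < 1 := (div_lt_one hM0).mpr hlam
    rw [ht]; linarith
  have htM : ‖lam‖ / t < M := by
    rw [div_lt_iff₀ ht0]
    have hMt : M * t = (‖lam‖ + M) / 2 := by rw [ht]; field_simp
    linarith [hMt ▸ (by linarith : ‖lam‖ < (‖lam‖ + M) / 2)]
  have hev : ∀ᶠ n in Filter.atTop, ‖lam‖ / t < ‖α n‖ :=
    hM.eventually (eventually_gt_nhds htM)
  -- summability of squares
  have hsum : Summable (fun n => ‖c n‖ ^ (2:ℝ)) := by
    refine summable_of_ratio_norm_eventually_le (r := t ^ (2:ℝ))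
      (Real.rpow_lt_one ht0.le ht1 (by norm_num)) ?_
    filter_upwards [hev] with n hn
    have hαpos : 0 < ‖α n‖ := norm_pos_iff.mpr (hnz n)
    have hstep : ‖c (n+1)‖ ≤ t * ‖c n‖ := by
      rw [hcs n, norm_div, norm_mul, norm_star]
      rw [div_le_iff₀ hαpos]
      have hl : ‖lam‖ ≤ t * ‖α n‖ := by
        rw [div_lt_iff₀ ht0] at hn
        nlinarith
      nlinarith [norm_nonneg (c n)]
    have h1 : ‖c (n+1)‖ ^ (2:ℝ) ≤ (t * ‖c n‖) ^ (2:ℝ) :=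
      Real.rpow_le_rpow (norm_nonneg _) hstep (by norm_num)
    rw [Real.norm_of_nonneg (Real.rpow_nonneg (norm_nonneg _) _),
      Real.norm_of_nonneg (Real.rpow_nonneg (norm_nonneg _) _)]
    calc ‖c (n+1)‖ ^ (2:ℝ) ≤ (t * ‖c n‖) ^ (2:ℝ) := h1
      _ = t ^ (2:ℝ) * ‖c n‖ ^ (2:ℝ) := Real.mul_rpow ht0.le (norm_nonneg _)
  have hmem : Memℓp c 2 := by
    refine memℓp_gen ?_
    have h2 : ((2:ENNReal)).toReal = (2:ℝ) := by norm_num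
    rw [h2]
    exact hsum
  set x : H := e.repr.symm ⟨c, hmem⟩ with hx
  have hxc : ∀ n, e.repr x n = c n := by
    intro n
    rw [hx, LinearIsometryEquiv.apply_symm_apply]
  have hxne : x ≠ 0 := by
    intro h
    have h0 := hxc 0
    rw [h, hc0] at h0
    simp at h0
  have heig : ContinuousLinearMap.adjoint S x = lam • x := by
    apply e.repr.injective
    refine lp.ext (funext fun n => ?_)
    have lhs : e.repr (ContinuousLinearMap.adjoint S x) n = lam * c n := by
      rw [HilbertBasis.repr_apply_apply, ContinuousLinearMap.adjoint_inner_right,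
        hS n, inner_smul_left, ← HilbertBasis.repr_apply_apply, hxc (n+1)]
      simpa using hrec n
    have rhs : e.repr (lam • x) n = lam * c n := by
      rw [map_smul, lp.coeFn_smul, Pi.smul_apply, hxc n, smul_eq_mul]
    rw [lhs, rhs]
  rw [spectrum.mem_iff]
  rintro ⟨u, hu⟩
  have h0 : (algebraMap ℂ (H →L[ℂ] H) lam - ContinuousLinearMap.adjoint S) x = 0 := by
    rw [ContinuousLinearMap.sub_apply, Algebra.algebraMap_eq_smul_one, heig]
    simp
  apply hxne
  calc x = ((↑u⁻¹ * ↑u : H →L[ℂ] H)) x := by rw [Units.inv_mul]; simp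
    _ = (↑u⁻¹ : H →L[ℂ] H) ((↑u : H →L[ℂ] H) x) := rfl
    _ = 0 := by rw [hu, h0, map_zero]

/-- The spectrum of a hyponormal unilateral weighted shift with nonzero weights
(and of its adjoint) is exactly the closed disk of radius `M = lim ‖α n‖`. -/
theorem spectrum_of_hyponormal_unilateral_weighted_shift
    {H : Type*} [NormedAddCommGroup H] [InnerProductSpace ℂ H] [CompleteSpace H]
    (e : HilbertBasis ℕ ℂ H) (α : ℕ → ℂ) (S : H →L[ℂ] H)
    (hS : ∀ n : ℕ, S (e n) = α n • e (n + 1))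
    (hmono : ∀ n : ℕ, ‖α n‖ ≤ ‖α (n + 1)‖)
    (hnz : ∀ n : ℕ, α n ≠ 0)
    (M : ℝ) (hM : Filter.Tendsto (fun n : ℕ => ‖α n‖) Filter.atTop (nhds M)) :
    spectrum ℂ S = {lam : ℂ | ‖lam‖ ≤ M} ∧
      spectrum ℂ (ContinuousLinearMap.adjoint S) = {lam : ℂ | ‖lam‖ ≤ M} := by
  haveI : Nontrivial H := ⟨e 0, 0, e.orthonormal.ne_zero 0⟩
  have hmonot : Monotone fun n => ‖α n‖ := monotone_nat_of_le_succ hmono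
  have hle : ∀ n, ‖α n‖ ≤ M := fun n => hmonot.ge_of_tendsto hM n
  have hM0 : 0 < M := lt_of_lt_of_le (norm_pos_iff.mpr (hnz 0)) (hle 0)
  have hnorm : ‖S‖ ≤ M := shift_norm_le' e α S hS M hM0.le hle
  have hAdjnorm : ‖ContinuousLinearMap.adjoint S‖ ≤ M := by
    rw [LinearIsometryEquiv.norm_map ContinuousLinearMap.adjoint S]
    exact hnorm
  have hAdj : spectrum ℂ (ContinuousLinearMap.adjoint S) = {lam : ℂ | ‖lam‖ ≤ M} := by
    apply Set.Subset.antisymm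
    · intro lam hl
      exact (spectrum.norm_le_norm_of_mem hl).trans hAdjnorm
    · intro lam hl
      have hball : Metric.closedBall (0:ℂ) M ⊆ spectrum ℂ (ContinuousLinearMap.adjoint S) := by
        rw [← closure_ball (0:ℂ) hM0.ne']
        refine closure_minimal (fun z hz => ?_) (spectrum.isClosed _)
        exact shift_adjoint_eigen e α S hS hnz M hM z (by simpa using hz)
      exact hball (by simpa using hl)
  have hstar : star (spectrum ℂ S) = {lam : ℂ | ‖lam‖ ≤ M} := by
    rw [← spectrum.map_star, ContinuousLinearMap.star_eq_adjoint]
    exact hAdj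
  refine ⟨?_, hAdj⟩
  ext lam
  constructor
  · intro h
    have h2 : star lam ∈ star (spectrum ℂ S) := Set.star_mem_star.mpr h
    rw [hstar] at h2
    simpa using h2
  · intro h
    have h2 : star lam ∈ star (spectrum ℂ S) := by
      rw [hstar]
      simpa using h
    exact Set.star_mem_star.mp h2
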